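/- Let α, γ be real numbers with α > 0 and γ > 0, let κ ≥ 0 and β > 0 satisfy β(α+γ) < 4, and set t̄ = κ − (α − γ)/2. If t < t̄ and p_t ∈ [0,1] is a fixed point of f_t(p) = 1/(1 + exp(β·(α − κ + t − p(α+γ)))), then p_t > 1/2. -/

import Mathlib

private lemma qre_aux_key (u : ℝ) (hu : 0 ≤ u) :
    (1 - u) * Real.exp (2 * u) ≤ 1 + u := by
  set h : ℝ → ℝ := fun u => (1 + u) - (1 - u) * Real.exp (2 * u) with hh
  have hderiv : ∀ x : ℝ, HasDerivAt h (1 - (1 - 2 * x) * Real.exp (2 * x)) x := by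
    intro x
    have he : HasDerivAt (fun y : ℝ => Real.exp (2 * y)) (Real.exp (2 * x) * 2) x := by
      simpa [Function.comp_def] using (Real.hasDerivAt_exp (2 * x)).comp x ((hasDerivAt_id x).const_mul 2)
    have h1 : HasDerivAt (fun y : ℝ => 1 - y) (-1 : ℝ) x := by
      simpa [Pi.sub_def] using (hasDerivAt_const x (1:ℝ)).sub (hasDerivAt_id x)
    have hmul := h1.mul he
    have hfull := ((hasDerivAt_const x (1:ℝ)).add (hasDerivAt_id x)).sub hmul
    refine hfull.congr_deriv ?_
    ring
  have hmono : Monotone h := by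
    apply monotone_of_deriv_nonneg
    · exact fun x => (hderiv x).differentiableAt
    · intro x
      rw [(hderiv x).deriv]
      have hexp : (1 - 2 * x) * Real.exp (2 * x) ≤ 1 := by
        have h1 : 1 - 2 * x ≤ Real.exp (-(2 * x)) := by
          have := Real.add_one_le_exp (-(2 * x)); linarith
        calc (1 - 2 * x) * Real.exp (2 * x)
            ≤ Real.exp (-(2 * x)) * Real.exp (2 * x) := by
              exact mul_le_mul_of_nonneg_right h1 (Real.exp_pos _).le
          _ = 1 := by rw [← Real.exp_add]; simp
      linarith
  have h0 : h 0 = 0 := by simp [hh]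
  have := hmono hu
  rw [h0] at this
  simp only [hh] at this
  linarith

/-- Below the threshold tax `t̄ = κ − (α − γ)/2`, the status quo is more likely:
any fixed point satisfies `p_t > 1/2`. -/
theorem qre_sb_below_threshold
    (α γ κ β : ℝ) (hα : 0 < α) (hγ : 0 < γ) (hκ : 0 ≤ κ) (hβ : 0 < β)
    (hcontr : β * (α + γ) < 4)
    (tbar : ℝ) (htbar : tbar = κ - (α - γ) / 2)
    (t p : ℝ) (ht : t < tbar) (hp : p ∈ Set.Icc (0:ℝ) 1)
    (hfix : 1 / (1 + Real.exp (β * (α - κ + t - p * (α + γ)))) = p) :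
    p > 1/2 := by
  by_contra hle
  push_neg at hle
  set s : ℝ := β * (α - κ + t - p * (α + γ)) with hs
  have hepos : 0 < Real.exp s := Real.exp_pos s
  have hden : 0 < 1 + Real.exp s := by linarith
  have hppos : 0 < p := by
    rw [← hfix]; positivity
  -- fixed point ⇒ exp s * p = 1 - p
  have hkey : Real.exp s * p = 1 - p := by
    have : p * (1 + Real.exp s) = 1 := by
      field_simp at hfix
      linarith [hfix]
    nlinarith
  set x : ℝ := 1/2 - p with hx
  have hx0 : 0 ≤ x := by simp [hx]; linarith
  have hxlt : x < 1/2 := by simp [hx]; linarith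
  set u : ℝ := 2 * x with hu
  have hu0 : 0 ≤ u := by positivity
  -- exp s = (1+u)/(1-u), so (1-u) * exp s = 1+u
  have hes : (1 - u) * Real.exp s = 1 + u := by
    have hpu : p = (1 - u) / 2 := by simp [hu, hx]; ring
    have : Real.exp s * ((1 - u)/2) = 1 - (1 - u)/2 := by rw [← hpu]; exact hkey
    nlinarith
  -- lower bound: s ≥ 2u
  have hlow : 2 * u ≤ s := by
    have haux := qre_aux_key u hu0
    have h1u : 0 < 1 - u := by
      rw [hu, hx]; linarith
    have : Real.exp (2 * u) ≤ Real.exp s := by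
      have h2 : (1 - u) * Real.exp (2 * u) ≤ (1 - u) * Real.exp s := by
        rw [hes]; exact haux
      exact le_of_mul_le_mul_left h2 h1u
    exact (Real.exp_le_exp).mp this
  -- upper bound: s < 2u
  have hsform : s = β * (t - tbar) + β * x * (α + γ) := by
    rw [hs, htbar, hx]; ring
  have hneg : β * (t - tbar) < 0 := mul_neg_of_pos_of_neg hβ (by linarith)
  have hub : β * x * (α + γ) ≤ 4 * x := by
    rcases eq_or_lt_of_le hx0 with h | h
    · rw [← h]; ring_nf; simp
    · nlinarith
  have : s < 2 * u := by
    rw [hsform, hu]; linarith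
  linarith
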